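/- The number of lattice walks from (0,0) to (x₀, y₀) using unit up-steps and unit right-steps that touch the line y = x + c is exactly binom(x₀ + y₀, y₀ - c), provided 0 < c < y₀ < x₀ + c. Consequently, if every set in a family 𝓕 ⊆ binom([n], k) corresponds to a walk hitting y = x + c, then |𝓕| ≤ binom(n, k - c). -/

import Mathlib

open Finset
open scoped Classical

/-- Least index where the walk of `F` hits the line (if it exists). -/
private noncomputable def mIdx (c : ℕ) (F : Finset ℕ) : ℕ :=
  if h : ∃ j, 2 * (F ∩ Finset.range j).card = j + c then Nat.find h else 0

private lemma mIdx_spec {c : ℕ} {F : Finset ℕ}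
    (h : ∃ j, 2 * (F ∩ Finset.range j).card = j + c) :
    2 * (F ∩ Finset.range (mIdx c F)).card = mIdx c F + c := by
  rw [mIdx, dif_pos h]; exact Nat.find_spec h

private lemma mIdx_le {c : ℕ} {F : Finset ℕ} {j : ℕ}
    (hj : 2 * (F ∩ Finset.range j).card = j + c) : mIdx c F ≤ j := by
  rw [mIdx, dif_pos ⟨j, hj⟩]; exact Nat.find_le hj

private lemma mIdx_min {c : ℕ} {F : Finset ℕ}
    (h : ∃ j, 2 * (F ∩ Finset.range j).card = j + c) {j : ℕ} (hj : j < mIdx c F) :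
    ¬ (2 * (F ∩ Finset.range j).card = j + c) := by
  rw [mIdx, dif_pos h] at hj; exact Nat.find_min h hj

/-- Reflection of the walk after its first hit of the line. -/
private noncomputable def rEfl (n c : ℕ) (F : Finset ℕ) : Finset ℕ :=
  (F ∩ Finset.range (mIdx c F)) ∪ ((Finset.range n \ F) \ Finset.range (mIdx c F))

private lemma rEfl_inter {n c j : ℕ} {F : Finset ℕ} (hj : j ≤ mIdx c F) :
    rEfl n c F ∩ Finset.range j = F ∩ Finset.range j := by
  ext x
  simp only [rEfl, Finset.mem_inter, Finset.mem_union, Finset.mem_sdiff, Finset.mem_range]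
  constructor
  · rintro ⟨⟨hF, _⟩ | ⟨_, hm⟩, h2⟩
    · exact ⟨hF, h2⟩
    · exact absurd (lt_of_lt_of_le h2 hj) hm
  · rintro ⟨hF, h2⟩
    exact ⟨Or.inl ⟨hF, lt_of_lt_of_le h2 hj⟩, h2⟩

private lemma rEfl_subset {n c : ℕ} {F : Finset ℕ} (hF : F ⊆ Finset.range n) :
    rEfl n c F ⊆ Finset.range n := by
  intro x hx
  simp only [rEfl, Finset.mem_union, Finset.mem_inter, Finset.mem_sdiff, Finset.mem_range] at hx ⊢
  rcases hx with ⟨hxF, _⟩ | ⟨⟨hxn, _⟩, _⟩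
  · exact Finset.mem_range.mp (hF hxF)
  · exact hxn

private lemma mIdx_rEfl {n c : ℕ} {F : Finset ℕ}
    (h : ∃ j, 2 * (F ∩ Finset.range j).card = j + c) :
    mIdx c (rEfl n c F) = mIdx c F := by
  have hhit : 2 * (rEfl n c F ∩ Finset.range (mIdx c F)).card = mIdx c F + c := by
    rw [rEfl_inter le_rfl]; exact mIdx_spec h
  refine le_antisymm (mIdx_le hhit) (le_of_not_gt fun hlt => ?_)
  have hspec := mIdx_spec ⟨_, hhit⟩
  rw [rEfl_inter (le_of_lt hlt)] at hspec
  exact mIdx_min h hlt hspec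

private lemma refl_refl_aux (n m : ℕ) (F : Finset ℕ) (hF : F ⊆ Finset.range n) :
    (((F ∩ Finset.range m) ∪ ((Finset.range n \ F) \ Finset.range m)) ∩ Finset.range m) ∪
      ((Finset.range n \ ((F ∩ Finset.range m) ∪ ((Finset.range n \ F) \ Finset.range m))) \
        Finset.range m) = F := by
  ext x
  have hxn : x ∈ F → x < n := fun hx => Finset.mem_range.mp (hF hx)
  simp only [Finset.mem_union, Finset.mem_inter, Finset.mem_sdiff, Finset.mem_range,
    not_or, not_and, not_lt]
  by_cases h1 : x ∈ F <;> by_cases h2 : x < m <;> by_cases h3 : x < n <;>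
    simp_all

private lemma rEfl_rEfl {n c : ℕ} {F : Finset ℕ} (hF : F ⊆ Finset.range n)
    (h : ∃ j, 2 * (F ∩ Finset.range j).card = j + c) :
    rEfl n c (rEfl n c F) = F := by
  have hm' : mIdx c ((F ∩ Finset.range (mIdx c F)) ∪
      ((Finset.range n \ F) \ Finset.range (mIdx c F))) = mIdx c F := mIdx_rEfl (n := n) h
  unfold rEfl
  rw [hm']
  exact refl_refl_aux n (mIdx c F) F hF

private lemma rEfl_card {n c : ℕ} {F : Finset ℕ} (hF : F ⊆ Finset.range n)
    (hmn : mIdx c F ≤ n)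
    (h : ∃ j, 2 * (F ∩ Finset.range j).card = j + c) :
    (rEfl n c F).card + F.card = n + c := by
  set m := mIdx c F with hm
  have hspec : 2 * (F ∩ Finset.range m).card = m + c := mIdx_spec h
  have hdisj : Disjoint (F ∩ Finset.range m) ((Finset.range n \ F) \ Finset.range m) :=
    Disjoint.mono_left Finset.inter_subset_right Finset.sdiff_disjoint.symm
  have hcard : (rEfl n c F).card =
      (F ∩ Finset.range m).card + ((Finset.range n \ F) \ Finset.range m).card := by
    rw [rEfl, Finset.card_union_of_disjoint hdisj]
  have hIco : Finset.range n \ Finset.range m = Finset.Ico m n := by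
    ext x; simp [Finset.mem_Ico]; omega
  have hcomm : (Finset.range n \ F) \ Finset.range m = Finset.Ico m n \ F := by
    rw [sdiff_right_comm, hIco]
  have hIF : Finset.Ico m n ∩ F = F \ Finset.range m := by
    ext x
    have hxn : x ∈ F → x < n := fun hx => Finset.mem_range.mp (hF hx)
    simp only [Finset.mem_inter, Finset.mem_Ico, Finset.mem_sdiff, Finset.mem_range, not_lt]
    constructor
    · rintro ⟨⟨hmx, _⟩, hxF⟩; exact ⟨hxF, hmx⟩
    · rintro ⟨hxF, hmx⟩; exact ⟨⟨hmx, hxn hxF⟩, hxF⟩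
  have e2 : (Finset.Ico m n \ F).card + (F \ Finset.range m).card = n - m := by
    rw [← hIF, Finset.card_sdiff_add_card_inter, Nat.card_Ico]
  have e3 : (F \ Finset.range m).card + (F ∩ Finset.range m).card = F.card :=
    Finset.card_sdiff_add_card_inter F (Finset.range m)
  have hFn : F.card ≤ n := by
    simpa using Finset.card_le_card hF
  rw [hcard, hcomm]
  omega

private lemma ivt {c n : ℕ} (hc : 0 < c) (F : Finset ℕ)
    (hn : n + c ≤ 2 * (F ∩ Finset.range n).card) :
    ∃ j ≤ n, 2 * (F ∩ Finset.range j).card = j + c := by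
  have step : ∀ j, (F ∩ Finset.range (j + 1)).card ≤ (F ∩ Finset.range j).card + 1 := by
    intro j
    have hsub : F ∩ Finset.range (j + 1) ⊆ insert j (F ∩ Finset.range j) := by
      intro x hx
      simp only [Finset.mem_inter, Finset.mem_range] at hx
      simp only [Finset.mem_insert, Finset.mem_inter, Finset.mem_range]
      rcases Nat.lt_succ_iff_lt_or_eq.mp hx.2 with h | h
      · exact Or.inr ⟨hx.1, h⟩
      · exact Or.inl h
    exact (Finset.card_le_card hsub).trans (Finset.card_insert_le _ _)
  have hex : ∃ j, j + c ≤ 2 * (F ∩ Finset.range j).card := ⟨n, hn⟩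
  set m := Nat.find hex with hmdef
  have hmn : m ≤ n := Nat.find_le hn
  have hspec : m + c ≤ 2 * (F ∩ Finset.range m).card := Nat.find_spec hex
  have hm0 : m ≠ 0 := by
    intro h0
    rw [h0] at hspec
    simp at hspec
    omega
  have hmin : ¬ ((m - 1) + c ≤ 2 * (F ∩ Finset.range (m - 1)).card) :=
    Nat.find_min hex (by omega)
  have hstep := step (m - 1)
  rw [Nat.sub_add_cancel (by omega)] at hstep
  exact ⟨m, hmn, by omega⟩

private lemma main (x₀ y₀ c : ℕ) (h1 : 0 < c) (h2 : c < y₀) (h3 : y₀ < x₀ + c) :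
    (((Finset.range (x₀ + y₀)).powersetCard y₀).filter
        (fun F => ∃ j ∈ Finset.range (x₀ + y₀ + 1),
          2 * (F ∩ Finset.range j).card = j + c)).card
      = (x₀ + y₀).choose (y₀ - c) := by
  set n := x₀ + y₀ with hn
  have hsymm : n.choose (y₀ - c) = n.choose (x₀ + c) := by
    rw [show y₀ - c = n - (x₀ + c) by omega]
    exact Nat.choose_symm (by omega)
  have hB : ((Finset.range n).powersetCard (x₀ + c)).card = n.choose (x₀ + c) := by
    rw [Finset.card_powersetCard, Finset.card_range]
  rw [hsymm, ← hB]
  -- facts about members of the filter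
  have hmemA : ∀ F ∈ (((Finset.range n).powersetCard y₀).filter
      (fun F => ∃ j ∈ Finset.range (n + 1), 2 * (F ∩ Finset.range j).card = j + c)),
      F ⊆ Finset.range n ∧ F.card = y₀ ∧
      (∃ j, 2 * (F ∩ Finset.range j).card = j + c) ∧ mIdx c F ≤ n := by
    intro F hF
    simp only [Finset.mem_filter, Finset.mem_powersetCard] at hF
    obtain ⟨⟨hsub, hcard⟩, j, hjmem, hj⟩ := hF
    exact ⟨hsub, hcard, ⟨j, hj⟩,
      (mIdx_le hj).trans (by simpa using Nat.lt_succ_iff.mp (Finset.mem_range.mp hjmem))⟩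
  have hmemB : ∀ G ∈ (Finset.range n).powersetCard (x₀ + c),
      G ⊆ Finset.range n ∧ G.card = x₀ + c ∧
      (∃ j, 2 * (G ∩ Finset.range j).card = j + c) ∧ mIdx c G ≤ n := by
    intro G hG
    rw [Finset.mem_powersetCard] at hG
    obtain ⟨hsub, hcard⟩ := hG
    have hGn : G ∩ Finset.range n = G := Finset.inter_eq_left.mpr hsub
    obtain ⟨j, hjn, hj⟩ := ivt h1 G (by rw [hGn, hcard]; omega)
    exact ⟨hsub, hcard, ⟨j, hj⟩, (mIdx_le hj).trans hjn⟩
  refine Finset.card_bij' (fun F _ => rEfl n c F) (fun G _ => rEfl n c G) ?_ ?_ ?_ ?_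
  · intro F hF
    obtain ⟨hsub, hcard, hex, hmle⟩ := hmemA F hF
    rw [Finset.mem_powersetCard]
    refine ⟨rEfl_subset hsub, ?_⟩
    show (rEfl n c F).card = x₀ + c
    have := rEfl_card hsub hmle hex
    omega
  · intro G hG
    obtain ⟨hsub, hcard, hex, hmle⟩ := hmemB G hG
    simp only [Finset.mem_filter, Finset.mem_powersetCard]
    have hcardR := rEfl_card hsub hmle hex
    refine ⟨⟨rEfl_subset hsub, ?_⟩, mIdx c G, Finset.mem_range.mpr (by omega), ?_⟩
    · show (rEfl n c G).card = y₀
      omega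
    · show 2 * ((rEfl n c G) ∩ Finset.range (mIdx c G)).card = mIdx c G + c
      rw [rEfl_inter le_rfl]
      exact mIdx_spec hex
  · intro F hF
    obtain ⟨hsub, _, hex, _⟩ := hmemA F hF
    exact rEfl_rEfl hsub hex
  · intro G hG
    obtain ⟨hsub, _, hex, _⟩ := hmemB G hG
    exact rEfl_rEfl hsub hex

/-- The number of lattice walks from `(0,0)` to `(x₀,y₀)` touching the line
`y = x + c` is `C(x₀+y₀, y₀-c)`; consequently a `k`-uniform family all of whose
walks hit `y = x + c` has size at most `C(n, k-c)`. -/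
theorem stmt2 (x₀ y₀ c : ℕ) (h1 : 0 < c) (h2 : c < y₀) (h3 : y₀ < x₀ + c) :
    (((Finset.range (x₀ + y₀)).powersetCard y₀).filter
        (fun F => ∃ j ∈ Finset.range (x₀ + y₀ + 1),
          2 * (F ∩ Finset.range j).card = j + c)).card
      = (x₀ + y₀).choose (y₀ - c)
    ∧ ∀ (n k : ℕ) (𝓕 : Finset (Finset ℕ)), 0 < c → c < k → k < (n - k) + c →
        𝓕 ⊆ (Finset.Icc 1 n).powersetCard k →
        (∀ F ∈ 𝓕, ∃ j ∈ Finset.range (n + 1),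
          2 * (F ∩ Finset.Icc 1 j).card = j + c) →
        𝓕.card ≤ n.choose (k - c) := by
  refine ⟨main x₀ y₀ c h1 h2 h3, ?_⟩
  intro n k 𝓕 hc hk hnk hsub hhit
  by_cases hkn : k ≤ n
  · -- map F ↦ F.image (· - 1) into the filtered set over range n
    have hmain := main (n - k) k c hc hk (by omega)
    rw [show n - k + k = n from by omega] at hmain
    rw [← hmain]
    refine Finset.card_le_card_of_injOn (fun F => F.image (· - 1)) ?_ ?_
    · intro F hF
      have hFsub : F ⊆ Finset.Icc 1 n :=
        (Finset.mem_powersetCard.mp (hsub hF)).1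
      have hFcard : F.card = k := (Finset.mem_powersetCard.mp (hsub hF)).2
      have hFel : ∀ x ∈ F, 1 ≤ x ∧ x ≤ n := by
        intro x hx; exact Finset.mem_Icc.mp (hFsub hx)
      have hinj : Set.InjOn (· - 1) F := by
        intro a ha b hb hab
        have := hFel a ha; have := hFel b hb
        simp only at hab; omega
      simp only [Finset.mem_coe, Finset.mem_filter, Finset.mem_powersetCard]
      refine ⟨⟨?_, ?_⟩, ?_⟩
      · intro y hy
        obtain ⟨x, hx, rfl⟩ := Finset.mem_image.mp hy
        have := hFel x hx
        exact Finset.mem_range.mpr (by omega)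
      · rw [Finset.card_image_of_injOn hinj, hFcard]
      · obtain ⟨j, hjmem, hj⟩ := hhit F hF
        refine ⟨j, hjmem, ?_⟩
        have himg : F.image (· - 1) ∩ Finset.range j = (F ∩ Finset.Icc 1 j).image (· - 1) := by
          ext y
          simp only [Finset.mem_inter, Finset.mem_image, Finset.mem_range, Finset.mem_Icc]
          constructor
          · rintro ⟨⟨x, hx, rfl⟩, hyj⟩
            have := hFel x hx
            exact ⟨x, ⟨hx, by omega, by omega⟩, rfl⟩
          · rintro ⟨x, ⟨hx, h1x, hxj⟩, rfl⟩
            exact ⟨⟨x, hx, rfl⟩, by omega⟩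
        rw [himg, Finset.card_image_of_injOn (hinj.mono (by
          intro a ha; exact (Finset.mem_inter.mp ha).1))]
        exact hj
    · intro F₁ hF₁ F₂ hF₂ heq
      have hel : ∀ F ∈ 𝓕, ∀ x ∈ F, 1 ≤ x := by
        intro F hF x hx
        exact (Finset.mem_Icc.mp ((Finset.mem_powersetCard.mp (hsub hF)).1 hx)).1
      have hback : ∀ F ∈ 𝓕, (F.image (· - 1)).image (· + 1) = F := by
        intro F hF
        ext x
        simp only [Finset.mem_image]
        constructor
        · rintro ⟨y, ⟨z, hz, rfl⟩, rfl⟩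
          have := hel F hF z hz
          rwa [Nat.sub_add_cancel this]
        · intro hx
          exact ⟨x - 1, ⟨x, hx, rfl⟩, Nat.sub_add_cancel (hel F hF x hx)⟩
      have h1 := hback F₁ hF₁
      have h2 := hback F₂ hF₂
      simp only at heq
      rw [← h1, ← h2, heq]
  · -- k > n : the family is empty
    have : 𝓕 = ∅ := by
      rw [Finset.eq_empty_iff_forall_notMem]
      intro F hF
      have h := Finset.mem_powersetCard.mp (hsub hF)
      have := Finset.card_le_card h.1
      simp [Nat.card_Icc] at this
      omega
    simp [this]
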